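/- Let d > 0 be a real with 1 - f(l) < d for all l, and set β(l) = √((1-f(l))/d) ∈ [0,1). Let θ be a real with θ ≥ (1-γ)/γ. Then for all integers k ≥ 1 and T ≥ 1: w̄(k,T) ≤ (1 + θ⁻¹) · Σ_{L=0}^{T-1} (θ·p·d)^k · ∏_{l=0}^{L} ( 1 + (1+θ⁻¹)·β(l)/(1-β(l)) ). -/

import Mathlib

set_option maxHeartbeats 1000000

/-- **Upper bound on `w̄` (Theorem 4, first statement).**
With `β l = √((1 - f l)/d) < 1` and `θ ≥ (1-γ)/γ`, the self-loop-free winning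
probability `w̄(k,T) = ∑_{i<T} α i * pr (k-1) i` satisfies
`w̄(k,T) ≤ (1+θ⁻¹) * ∑_{L<T} (θpd)^k * ∏_{l=0}^{L} (1 + (1+θ⁻¹) β l/(1-β l))`. -/
theorem selfloop_free_general_upper_bound
    (p h γ : ℝ) (hp : 0 < p) (hh : 0 ≤ h) (hph : p + h ≤ 1)
    (hγ0 : 0 < γ) (hγ1 : γ < 1)
    (f : ℕ → ℝ) (hf0 : ∀ l, 0 ≤ f l) (hf1 : ∀ l, f l ≤ 1)
    (α : ℕ → ℝ)
    (hα : ∀ l, α l = p * (1 - f l) / (γ + (1 - γ) * (p + h) * (1 - f l)))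
    (pr : ℕ → ℕ → ℝ)
    (hpr00 : pr 0 0 = 1)
    (hpr0 : ∀ i, pr 0 (i + 1) = (1 - α i) * pr 0 i)
    (hprj0 : ∀ j, pr (j + 1) 0 = ((1 - γ) * α 0) ^ (j + 1))
    (hprrec : ∀ j i, pr (j + 1) (i + 1) =
      (1 - γ) * α (i + 1) * pr j (i + 1) + γ * α i * pr j i + (1 - α i) * pr (j + 1) i)
    (d : ℝ) (hd : 0 < d) (hfd : ∀ l, 1 - f l < d)
    (β : ℕ → ℝ) (hβ : ∀ l, β l = Real.sqrt ((1 - f l) / d))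
    (θ : ℝ) (hθ : (1 - γ) / γ ≤ θ)
    (k : ℕ) (hk : 1 ≤ k) (T : ℕ) (hT : 1 ≤ T) :
    ∑ i ∈ Finset.range T, α i * pr (k - 1) i ≤
      (1 + θ⁻¹) * ∑ L ∈ Finset.range T, (θ * p * d) ^ k *
        ∏ l ∈ Finset.range (L + 1), (1 + (1 + θ⁻¹) * (β l / (1 - β l))) := by
  -- basic positivity facts
  have hθ0 : 0 < θ := lt_of_lt_of_le (div_pos (by linarith) hγ0) hθ
  have hθγ : 1 - γ ≤ θ * γ := by
    have := (div_le_iff₀ hγ0).mp hθ; linarith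
  have hθinv : 0 < θ⁻¹ := inv_pos.mpr hθ0
  have hc0 : (0:ℝ) < 1 + θ⁻¹ := by linarith
  set M : ℝ := θ * p * d with hMdef
  have hM : 0 < M := by positivity
  -- β facts
  have hfnn : ∀ l, 0 ≤ 1 - f l := fun l => by linarith [hf1 l]
  have hβsq : ∀ l, β l ^ 2 = (1 - f l) / d := by
    intro l
    rw [hβ, sq, Real.mul_self_sqrt (div_nonneg (hfnn l) hd.le)]
  have hβ0 : ∀ l, 0 ≤ β l := fun l => by rw [hβ]; exact Real.sqrt_nonneg _
  have hβlt : ∀ l, β l ^ 2 < 1 := by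
    intro l; rw [hβsq]; exact (div_lt_one hd).mpr (hfd l)
  have hβpos : ∀ l, 0 < 1 - β l ^ 2 := fun l => by linarith [hβlt l]
  have hβlt1 : ∀ l, β l < 1 := by
    intro l; nlinarith [hβ0 l, hβlt l]
  -- α facts
  have hden : ∀ l, 0 < γ + (1 - γ) * (p + h) * (1 - f l) := by
    intro l
    have h1 : 0 ≤ (1 - γ) * (p + h) * (1 - f l) :=
      mul_nonneg (mul_nonneg (by linarith) (by linarith)) (hfnn l)
    linarith
  have hα0 : ∀ l, 0 ≤ α l := by
    intro l; rw [hα]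
    exact div_nonneg (mul_nonneg hp.le (hfnn l)) (hden l).le
  have hα1 : ∀ l, α l ≤ 1 := by
    intro l; rw [hα, div_le_one (hden l)]
    have h1 : 0 ≤ (1 - γ) * h * (1 - f l) :=
      mul_nonneg (mul_nonneg (by linarith) hh) (hfnn l)
    have h2 : p * (1 - f l) ≤ 1 := by
      have : p ≤ 1 := by linarith
      nlinarith [hfnn l, hf0 l]
    nlinarith
  have hpdβ : ∀ l, p * d * β l ^ 2 = p * (1 - f l) := by
    intro l; rw [hβsq]; field_simp
  have hpdM : p * d = θ⁻¹ * M := by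
    rw [hMdef]; field_simp
  clear_value M
  have hγα : ∀ l, γ * α l ≤ θ⁻¹ * M * β l ^ 2 := by
    intro l
    have key : γ * α l ≤ p * (1 - f l) := by
      rw [hα, mul_div_assoc', div_le_iff₀ (hden l)]
      nlinarith [mul_nonneg hp.le (hfnn l), hden l,
        mul_nonneg (mul_nonneg (mul_nonneg (by linarith : (0:ℝ) ≤ 1 - γ) (by linarith : (0:ℝ) ≤ p + h)) (hfnn l)) (mul_nonneg hp.le (hfnn l))]
    calc γ * α l ≤ p * (1 - f l) := key
      _ = p * d * β l ^ 2 := (hpdβ l).symm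
      _ = θ⁻¹ * M * β l ^ 2 := by rw [hpdM]
  have h1γα : ∀ l, (1 - γ) * α l ≤ M * β l ^ 2 := by
    intro l
    have h1 : (1 - γ) * α l ≤ θ * γ * α l := by
      nlinarith [hα0 l]
    have h2 : θ * (γ * α l) ≤ θ * (θ⁻¹ * M * β l ^ 2) :=
      mul_le_mul_of_nonneg_left (hγα l) hθ0.le
    have h3 : θ * (θ⁻¹ * M * β l ^ 2) = M * β l ^ 2 := by
      field_simp
    nlinarith []
  have hαbound : ∀ l, α l ≤ (1 + θ⁻¹) * (M * β l ^ 2) := by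
    intro l
    have h1 := hγα l
    have h2 := h1γα l
    have : α l = γ * α l + (1 - γ) * α l := by ring
    nlinarith
  -- pr nonneg
  have hprnn : ∀ j i, 0 ≤ pr j i := by
    intro j
    induction j with
    | zero =>
      intro i
      induction i with
      | zero => rw [hpr00]; norm_num
      | succ i ih =>
        rw [hpr0]
        exact mul_nonneg (by linarith [hα1 i]) ih
    | succ j ihj =>
      intro i
      induction i with
      | zero =>
        rw [hprj0]
        exact pow_nonneg (mul_nonneg (by linarith) (hα0 0)) _
      | succ i ihi =>
        rw [hprrec]
        have t1 : 0 ≤ (1 - γ) * α (i + 1) * pr j (i + 1) :=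
          mul_nonneg (mul_nonneg (by linarith) (hα0 (i+1))) (ihj (i+1))
        have t2 : 0 ≤ γ * α i * pr j i :=
          mul_nonneg (mul_nonneg hγ0.le (hα0 i)) (ihj i)
        have t3 : 0 ≤ (1 - α i) * pr (j + 1) i :=
          mul_nonneg (by linarith [hα1 i]) ihi
        linarith
  have hpr0le : ∀ i, pr 0 i ≤ 1 := by
    intro i
    induction i with
    | zero => rw [hpr00]
    | succ i ih =>
      rw [hpr0]
      nlinarith [hprnn 0 i, hα0 i, hα1 i]
  -- the per-level factor
  set F : ℕ → ℝ := fun l => 1 + (1 + θ⁻¹) * (β l ^ 2 / (1 - β l ^ 2)) with hF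
  have hF1 : ∀ l, 1 ≤ F l := by
    intro l
    have hx : 0 ≤ β l ^ 2 / (1 - β l ^ 2) := div_nonneg (sq_nonneg _) (hβpos l).le
    have : 0 ≤ (1 + θ⁻¹) * (β l ^ 2 / (1 - β l ^ 2)) := mul_nonneg hc0.le hx
    simp only [hF]; linarith
  have hPone : ∀ i, 1 ≤ ∏ l ∈ Finset.range i, F l := by
    intro i
    induction i with
    | zero => simp
    | succ i ih =>
      rw [Finset.prod_range_succ]
      nlinarith [hF1 i]
  have hPpos : ∀ i, 0 < ∏ l ∈ Finset.range i, F l := fun i => lt_of_lt_of_le one_pos (hPone i)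
  -- geometric sum bound
  have hgeom : ∀ (n : ℕ) (r : ℝ), 0 ≤ r → r < 1 →
      ∑ j ∈ Finset.range n, r ^ j ≤ 1 / (1 - r) := by
    intro n r h0 h1
    have hne : r ≠ 1 := by linarith
    rw [geom_sum_eq hne]
    have heq : (r ^ n - 1) / (r - 1) = (1 - r ^ n) / (1 - r) := by
      rw [div_eq_div_iff (by linarith : r - 1 ≠ 0) (by linarith : 1 - r ≠ 0)]
      ring
    rw [heq, div_le_div_iff₀ (by linarith : (0:ℝ) < 1 - r) (by linarith : (0:ℝ) < 1 - r)]
    nlinarith [pow_nonneg h0 n]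
  -- key invariant
  have key : ∀ J i, (∑ j ∈ Finset.range (J + 1), pr j i / M ^ j)
      ≤ (∏ l ∈ Finset.range i, F l) / (1 - β i ^ 2) := by
    intro J
    induction J with
    | zero =>
      intro i
      simp only [zero_add, Finset.sum_range_one, pow_zero, div_one]
      rw [le_div_iff₀ (hβpos i)]
      nlinarith [hprnn 0 i, hpr0le i, hβpos i, hβlt i, sq_nonneg (β i), hPone i]
    | succ J IH =>
      intro i
      induction i with
      | zero =>
        simp only [Finset.prod_range_zero]
        have hterm : ∀ j, pr j 0 / M ^ j ≤ (β 0 ^ 2) ^ j := by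
          intro j
          cases j with
          | zero => simp [hpr00]
          | succ j =>
            rw [hprj0]
            have hr : (1 - γ) * α 0 / M ≤ β 0 ^ 2 := by
              rw [div_le_iff₀ hM]
              nlinarith [h1γα 0]
            calc ((1 - γ) * α 0) ^ (j + 1) / M ^ (j + 1)
                = ((1 - γ) * α 0 / M) ^ (j + 1) := by rw [div_pow]
              _ ≤ (β 0 ^ 2) ^ (j + 1) := by
                  apply pow_le_pow_left₀ ?_ hr
                  exact div_nonneg (mul_nonneg (by linarith) (hα0 0)) hM.le
        calc ∑ j ∈ Finset.range (J + 1 + 1), pr j 0 / M ^ j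
            ≤ ∑ j ∈ Finset.range (J + 1 + 1), (β 0 ^ 2) ^ j :=
              Finset.sum_le_sum fun j _ => hterm j
          _ ≤ 1 / (1 - β 0 ^ 2) := hgeom _ _ (sq_nonneg _) (hβlt 0)
      | succ i IHi =>
        have hstep : ∀ j, pr (j + 1) (i + 1) / M ^ (j + 1) ≤
            β (i + 1) ^ 2 * (pr j (i + 1) / M ^ j) + θ⁻¹ * β i ^ 2 * (pr j i / M ^ j)
              + pr (j + 1) i / M ^ (j + 1) := by
          intro j
          have hMj : (0:ℝ) < M ^ j := pow_pos hM j
          have hMj1 : (0:ℝ) < M ^ (j + 1) := pow_pos hM (j + 1)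
          rw [hprrec, pow_succ, add_div, add_div]
          have t1 : (1 - γ) * α (i + 1) * pr j (i + 1) / (M ^ j * M)
              ≤ β (i + 1) ^ 2 * (pr j (i + 1) / M ^ j) := by
            rw [mul_div_assoc' (β (i+1)^2), div_le_div_iff₀ (by positivity) hMj]
            nlinarith [mul_le_mul_of_nonneg_right (h1γα (i + 1))
              (mul_nonneg (hprnn j (i + 1)) hMj.le), hprnn j (i+1), hMj]
          have t2 : γ * α i * pr j i / (M ^ j * M)
              ≤ θ⁻¹ * β i ^ 2 * (pr j i / M ^ j) := by
            rw [mul_div_assoc' (θ⁻¹ * β i ^ 2), div_le_div_iff₀ (by positivity) hMj]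
            nlinarith [mul_le_mul_of_nonneg_right (hγα i)
              (mul_nonneg (hprnn j i) hMj.le), hprnn j i, hMj]
          have t3 : (1 - α i) * pr (j + 1) i / (M ^ j * M)
              ≤ pr (j + 1) i / (M ^ j * M) := by
            apply div_le_div_of_nonneg_right ?_ (by positivity)
            nlinarith [hprnn (j + 1) i, hα0 i]
          linarith
        -- expand the sum
        rw [Finset.sum_range_succ']
        have hsplit : ∑ j ∈ Finset.range (J + 1), pr (j + 1) (i + 1) / M ^ (j + 1)
            ≤ β (i + 1) ^ 2 * (∑ j ∈ Finset.range (J + 1), pr j (i + 1) / M ^ j)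
              + θ⁻¹ * β i ^ 2 * (∑ j ∈ Finset.range (J + 1), pr j i / M ^ j)
              + ∑ j ∈ Finset.range (J + 1), pr (j + 1) i / M ^ (j + 1) := by
          rw [Finset.mul_sum, Finset.mul_sum, ← Finset.sum_add_distrib, ← Finset.sum_add_distrib]
          exact Finset.sum_le_sum fun j _ => hstep j
        have htail : ∑ j ∈ Finset.range (J + 1), pr (j + 1) i / M ^ (j + 1)
            = (∑ j ∈ Finset.range (J + 1 + 1), pr j i / M ^ j) - pr 0 i := by
          rw [Finset.sum_range_succ' (fun j => pr j i / M ^ j) (J + 1)]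
          simp
        have h0term : pr 0 (i + 1) / M ^ 0 ≤ pr 0 i := by
          simp only [pow_zero, div_one]
          rw [hpr0]
          nlinarith [hprnn 0 i, hα0 i]
        have hIH1 := IH (i + 1)
        have hIH2 := IH i
        have habs : ∀ P x y : ℝ, 1 - x ≠ 0 → 1 - y ≠ 0 →
            y * ((P * (1 + (1 + θ⁻¹) * (x / (1 - x)))) / (1 - y)) + θ⁻¹ * x * (P / (1 - x))
              + P / (1 - x)
              = (P * (1 + (1 + θ⁻¹) * (x / (1 - x)))) / (1 - y) := by
          intro P x y hx hy
          have hθne : θ ≠ 0 := ne_of_gt hθ0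
          field_simp
          ring
        have halg : β (i + 1) ^ 2 * ((∏ l ∈ Finset.range (i + 1), F l) / (1 - β (i + 1) ^ 2))
            + θ⁻¹ * β i ^ 2 * ((∏ l ∈ Finset.range i, F l) / (1 - β i ^ 2))
            + (∏ l ∈ Finset.range i, F l) / (1 - β i ^ 2)
            = (∏ l ∈ Finset.range (i + 1), F l) / (1 - β (i + 1) ^ 2) := by
          rw [Finset.prod_range_succ]
          simp only [hF]
          exact habs _ _ _ (ne_of_gt (hβpos i)) (ne_of_gt (hβpos (i + 1)))
        have hb1 : β (i + 1) ^ 2 * (∑ j ∈ Finset.range (J + 1), pr j (i + 1) / M ^ j)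
            ≤ β (i + 1) ^ 2 * ((∏ l ∈ Finset.range (i + 1), F l) / (1 - β (i + 1) ^ 2)) :=
          mul_le_mul_of_nonneg_left hIH1 (sq_nonneg _)
        have hb2 : θ⁻¹ * β i ^ 2 * (∑ j ∈ Finset.range (J + 1), pr j i / M ^ j)
            ≤ θ⁻¹ * β i ^ 2 * ((∏ l ∈ Finset.range i, F l) / (1 - β i ^ 2)) :=
          mul_le_mul_of_nonneg_left hIH2 (by positivity)
        have hS := IHi
        linarith [hsplit, htail, h0term, hb1, hb2, hS, halg]
  -- termwise bound and final assembly
  obtain ⟨n, rfl⟩ : ∃ n, k = n + 1 := ⟨k - 1, (Nat.succ_pred_eq_of_pos hk).symm⟩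
  simp only [Nat.add_sub_cancel]
  have hterm : ∀ i, α i * pr (n) i
      ≤ (1 + θ⁻¹) * (M ^ (n + 1) * ∏ l ∈ Finset.range (i + 1), F l) := by
    intro i
    have hMk1 : (0:ℝ) < M ^ (n) := pow_pos hM _
    have h1 : pr (n) i / M ^ (n) ≤ (∏ l ∈ Finset.range i, F l) / (1 - β i ^ 2) := by
      refine le_trans ?_ (key (n) i)
      apply Finset.single_le_sum (f := fun j => pr j i / M ^ j)
        (fun j _ => div_nonneg (hprnn j i) (pow_pos hM j).le)
      exact Finset.self_mem_range_succ (n)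
    have h2 : pr (n) i ≤ M ^ (n) * ((∏ l ∈ Finset.range i, F l) / (1 - β i ^ 2)) := by
      rw [← div_le_iff₀' hMk1]  -- hopefully pr / M^(k-1) ≤ RHS
      exact h1
    have h3 : α i * pr (n) i
        ≤ ((1 + θ⁻¹) * (M * β i ^ 2)) * (M ^ (n) * ((∏ l ∈ Finset.range i, F l) / (1 - β i ^ 2))) := by
      apply mul_le_mul (hαbound i) h2 (hprnn _ _)
      positivity
    have h4 : ((1 + θ⁻¹) * (M * β i ^ 2)) * (M ^ (n) * ((∏ l ∈ Finset.range i, F l) / (1 - β i ^ 2)))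
        = (1 + θ⁻¹) * (M ^ (n + 1) * ((∏ l ∈ Finset.range i, F l) * (β i ^ 2 / (1 - β i ^ 2)))) := by
      rw [pow_succ]
      ring
    have h5 : (∏ l ∈ Finset.range i, F l) * (β i ^ 2 / (1 - β i ^ 2))
        ≤ ∏ l ∈ Finset.range (i + 1), F l := by
      rw [Finset.prod_range_succ]
      apply mul_le_mul_of_nonneg_left ?_ (hPpos i).le
      have hx : 0 ≤ β i ^ 2 / (1 - β i ^ 2) := div_nonneg (sq_nonneg _) (hβpos i).le
      simp only [hF]
      nlinarith [hx, hθinv]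
    calc α i * pr (n) i
        ≤ (1 + θ⁻¹) * (M ^ (n + 1) * ((∏ l ∈ Finset.range i, F l) * (β i ^ 2 / (1 - β i ^ 2)))) := by
          rw [← h4]; exact h3
      _ ≤ (1 + θ⁻¹) * (M ^ (n + 1) * ∏ l ∈ Finset.range (i + 1), F l) := by
          apply mul_le_mul_of_nonneg_left ?_ hc0.le
          exact mul_le_mul_of_nonneg_left h5 (pow_pos hM (n + 1)).le
  have hFG : ∀ l, F l ≤ 1 + (1 + θ⁻¹) * (β l / (1 - β l)) := by
    intro l
    have hd1 : 0 < 1 - β l := by linarith [hβlt1 l]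
    have hdiv : β l ^ 2 / (1 - β l ^ 2) ≤ β l / (1 - β l) := by
      rw [div_le_div_iff₀ (hβpos l) hd1]
      nlinarith [hβ0 l, hβlt1 l]
    simp only [hF]
    nlinarith [hdiv, hc0]
  calc ∑ i ∈ Finset.range T, α i * pr (n) i
      ≤ ∑ i ∈ Finset.range T, (1 + θ⁻¹) * (M ^ (n + 1) * ∏ l ∈ Finset.range (i + 1), F l) :=
        Finset.sum_le_sum fun i _ => hterm i
    _ ≤ ∑ i ∈ Finset.range T, (1 + θ⁻¹) * (M ^ (n + 1) *
          ∏ l ∈ Finset.range (i + 1), (1 + (1 + θ⁻¹) * (β l / (1 - β l)))) := by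
        apply Finset.sum_le_sum
        intro i _
        apply mul_le_mul_of_nonneg_left ?_ hc0.le
        apply mul_le_mul_of_nonneg_left ?_ (pow_pos hM (n + 1)).le
        apply Finset.prod_le_prod (fun l _ => by linarith [hF1 l]) (fun l _ => hFG l)
    _ = (1 + θ⁻¹) * ∑ L ∈ Finset.range T, M ^ (n + 1) *
          ∏ l ∈ Finset.range (L + 1), (1 + (1 + θ⁻¹) * (β l / (1 - β l))) := by
        rw [Finset.mul_sum]
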